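/- Let u > 0 and let f : [0,u] → ℝ be continuous and concave, with f(0) = ℓ and maximum value h attained at some σ ∈ [0,u], i.e. f(σ) = h = max_{t ∈ [0,u]} f(t). Let τ satisfy ℓ < τ ≤ h, and let α be the smallest point of [0,σ] with f(α) = τ (which exists by the intermediate value theorem). Then α ≤ (τ−ℓ)·σ/(h−ℓ), f(t) ≤ τ for all t ∈ [0,α], and ∫_0^α (τ − f(t)) dt ≤ σ·(τ−ℓ)²/(2(h−ℓ)). -/

import Mathlib

/-- For a continuous concave `f` on `[0,u]` with `f 0 = ℓ`, maximum value `h`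
attained at `σ ∈ [0,u]`, and a target `τ` with `ℓ < τ ≤ h`, the least point `α` of `[0,σ]`
with `f α = τ` satisfies `α ≤ (τ-ℓ)·σ/(h-ℓ)`, `f ≤ τ` on `[0,α]`, and
`∫_0^α (τ - f) ≤ σ·(τ-ℓ)²/(2(h-ℓ))`. -/
theorem rudimentary_strategy_left_cost
    (u : ℝ) (hu : 0 < u) (f : ℝ → ℝ)
    (hf_cont : ContinuousOn f (Set.Icc 0 u))
    (hf_conc : ConcaveOn ℝ (Set.Icc 0 u) f)
    (ℓ h σ : ℝ) (hℓ : f 0 = ℓ)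
    (hσ_mem : σ ∈ Set.Icc 0 u) (hσ : f σ = h)
    (hh_max : ∀ t ∈ Set.Icc 0 u, f t ≤ h)
    (τ : ℝ) (hτ_lo : ℓ < τ) (hτ_hi : τ ≤ h)
    (α : ℝ) (hα : IsLeast {t | t ∈ Set.Icc 0 σ ∧ f t = τ} α) :
    α ≤ (τ - ℓ) * σ / (h - ℓ) ∧
    (∀ t ∈ Set.Icc 0 α, f t ≤ τ) ∧
    ∫ t in (0 : ℝ)..α, (τ - f t) ≤ σ * (τ - ℓ) ^ 2 / (2 * (h - ℓ)) := by
  obtain ⟨⟨⟨hα0, hασ⟩, hfα⟩, hleast⟩ := hα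
  have hσ0 : 0 ≤ σ := hσ_mem.1
  have hσu : σ ≤ u := hσ_mem.2
  have hhℓ : ℓ < h := lt_of_lt_of_le hτ_lo hτ_hi
  have hσpos : 0 < σ := by
    rcases hσ0.lt_or_eq with h1 | h1
    · exact h1
    · exfalso; rw [← h1] at hσ; rw [hσ] at hℓ; linarith
  -- chord bound from concavity
  have chord : ∀ t ∈ Set.Icc (0:ℝ) σ, ℓ + t * (h - ℓ) / σ ≤ f t := by
    intro t ht
    have h0mem : (0:ℝ) ∈ Set.Icc (0:ℝ) u := ⟨le_refl 0, hu.le⟩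
    have ha : 0 ≤ 1 - t / σ := by
      have : t / σ ≤ 1 := (div_le_one hσpos).2 ht.2
      linarith
    have hb : 0 ≤ t / σ := div_nonneg ht.1 hσ0
    have hab : (1 - t / σ) + t / σ = 1 := by ring
    have hcc := hf_conc.2 h0mem hσ_mem ha hb hab
    have harg : (1 - t / σ) • (0:ℝ) + (t / σ) • σ = t := by
      rw [smul_eq_mul, smul_eq_mul, mul_zero, zero_add, div_mul_cancel₀ t hσpos.ne']
    rw [harg, hℓ, hσ] at hcc
    have hcc' : (1 - t / σ) * ℓ + (t / σ) * h ≤ f t := by simpa using hcc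
    have heq : ℓ + t * (h - ℓ) / σ = (1 - t / σ) * ℓ + (t / σ) * h := by
      field_simp; ring
    linarith [heq ▸ hcc']
  -- part 1
  have hchordα := chord α ⟨hα0, hασ⟩
  rw [hfα] at hchordα
  have p1 : α ≤ (τ - ℓ) * σ / (h - ℓ) := by
    rw [le_div_iff₀ (by linarith)]
    have := (div_le_iff₀ hσpos).1 (by linarith : α * (h - ℓ) / σ ≤ τ - ℓ)
    linarith
  -- part 2
  have p2 : ∀ t ∈ Set.Icc 0 α, f t ≤ τ := by
    intro t ht
    by_contra hgt
    push_neg at hgt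
    have ht0 : 0 ≤ t := ht.1
    have htα : t ≤ α := ht.2
    have hcont' : ContinuousOn f (Set.Icc 0 t) :=
      hf_cont.mono (Set.Icc_subset_Icc le_rfl (by linarith))
    have : τ ∈ f '' Set.Icc 0 t := by
      apply intermediate_value_Icc ht0 hcont'
      rw [hℓ]
      exact ⟨hτ_lo.le, hgt.le⟩
    obtain ⟨s, hs, hfs⟩ := this
    have hsle := hleast ⟨⟨hs.1, by linarith [hs.2]⟩, hfs⟩
    have : t ≠ α := fun he => by rw [he, hfα] at hgt; exact lt_irrefl _ hgt
    have : s ≤ t := hs.2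
    linarith [lt_of_le_of_ne htα ‹t ≠ α›]
  refine ⟨p1, p2, ?_⟩
  -- part 3
  have hint1 : IntervalIntegrable (fun t => τ - f t) MeasureTheory.volume 0 α := by
    apply ContinuousOn.intervalIntegrable
    apply ContinuousOn.sub continuousOn_const
    apply hf_cont.mono
    rw [Set.uIcc_of_le hα0]
    exact Set.Icc_subset_Icc le_rfl (by linarith)
  have hint2 : IntervalIntegrable (fun t => τ - (ℓ + t * (h - ℓ) / σ)) MeasureTheory.volume 0 α := by
    apply ContinuousOn.intervalIntegrable
    fun_prop
  have hmono : ∫ t in (0:ℝ)..α, (τ - f t) ≤ ∫ t in (0:ℝ)..α, (τ - (ℓ + t * (h - ℓ) / σ)) := by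
    apply intervalIntegral.integral_mono_on hα0 hint1 hint2
    intro t ht
    have := chord t ⟨ht.1, le_trans ht.2 hασ⟩
    linarith
  have hcomp : ∫ t in (0:ℝ)..α, (τ - (ℓ + t * (h - ℓ) / σ)) =
      (τ - ℓ) * α - α ^ 2 / 2 * ((h - ℓ) / σ) := by
    have : (fun t : ℝ => τ - (ℓ + t * (h - ℓ) / σ)) =
        (fun t : ℝ => (τ - ℓ) - t * ((h - ℓ) / σ)) := by
      funext t; ring
    rw [this, intervalIntegral.integral_sub intervalIntegrable_const
      ((intervalIntegral.intervalIntegrable_id).mul_const _)]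
    simp [integral_id]
    ring
  rw [hcomp] at hmono
  have key : (τ - ℓ) * α - α ^ 2 / 2 * ((h - ℓ) / σ) ≤ σ * (τ - ℓ) ^ 2 / (2 * (h - ℓ)) := by
    have hrw : (τ - ℓ) * α - α ^ 2 / 2 * ((h - ℓ) / σ) =
        (2 * σ * (τ - ℓ) * α - α ^ 2 * (h - ℓ)) / (2 * σ) := by
      field_simp
    rw [hrw, div_le_div_iff₀ (by positivity) (by linarith : (0:ℝ) < 2 * (h - ℓ))]
    nlinarith [sq_nonneg (σ * (τ - ℓ) - α * (h - ℓ))]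
  linarith
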